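/- Let P ⊂ l∞^n be a convex polyhedron with nonempty interior. Then P (with the induced l∞-metric) is injective if and only if the tangent cone T_pP (with the induced l∞-metric) is injective for every boundary point p ∈ ∂P. -/

import Mathlib

open Set Metric Filter Topology



/-- A metric space `X` is *injective* if for all metric spaces `A`, `B`, every isometric
embedding `i : A → B` and every `1`-Lipschitz map `f : A → X`, there is a `1`-Lipschitz
map `g : B → X` with `g ∘ i = f`. -/
def IsInjectiveMetricSpace (X : Type) [MetricSpace X] : Prop :=
  ∀ (A B : Type) [MetricSpace A] [MetricSpace B], ∀ (i : A → B) (f : A → X),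
    Isometry i → LipschitzWith 1 f →
      ∃ g : B → X, LipschitzWith 1 g ∧ ∀ a, g (i a) = f a

/-- A subset of `l∞ⁿ = (Fin n → ℝ)` (whose product metric is the sup-metric) is injective
if it is an injective metric space with the induced metric. -/
def IsInjectiveSubset {n : ℕ} (S : Set (Fin n → ℝ)) : Prop :=
  IsInjectiveMetricSpace S

/-- `S` admits a 1-Lipschitz retraction from all of `l∞ⁿ`. -/
def HasRetraction {n : ℕ} (S : Set (Fin n → ℝ)) : Prop :=
  ∃ r : (Fin n → ℝ) → (Fin n → ℝ),
    (∀ x y, dist (r x) (r y) ≤ dist x y) ∧ (∀ z, r z ∈ S) ∧ (∀ x ∈ S, r x = x)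

lemma IsInjectiveSubset.hasRetraction {n : ℕ} {S : Set (Fin n → ℝ)}
    (h : IsInjectiveSubset S) : HasRetraction S := by
  obtain ⟨g, hg, hgi⟩ := h S (Fin n → ℝ) Subtype.val id isometry_subtype_coe LipschitzWith.id
  refine ⟨fun z => (g z : Fin n → ℝ), fun x y => ?_, fun z => (g z).2, fun x hx => ?_⟩
  · exact (hg.dist_le_mul x y).trans (by simp)
  · have := hgi ⟨x, hx⟩
    simpa [Subtype.ext_iff] using congrArg Subtype.val this

lemma HasRetraction.isInjectiveSubset {n : ℕ} {S : Set (Fin n → ℝ)}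
    (h : HasRetraction S) : IsInjectiveSubset S := by
  obtain ⟨r, hr, hrS, hrfix⟩ := h
  intro A B _ _ i f hi hf
  classical
  -- define f₀ : B → ℝⁿ on range i
  set f₀ : B → (Fin n → ℝ) := fun b =>
    if h : b ∈ range i then (f h.choose : Fin n → ℝ) else 0 with hf₀
  have key : ∀ a : A, f₀ (i a) = (f a : Fin n → ℝ) := by
    intro a
    have hmem : i a ∈ range i := ⟨a, rfl⟩
    have h1 : i (hmem.choose) = i a := hmem.choose_spec
    have : hmem.choose = a := hi.injective h1
    simp [hf₀, hmem, this]
  have hlip : LipschitzOnWith 1 f₀ (range i) := by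
    apply LipschitzOnWith.of_dist_le_mul
    rintro x ⟨a, rfl⟩ y ⟨a', rfl⟩
    rw [key a, key a']
    have : dist (f a) (f a') ≤ dist a a' := by simpa using hf.dist_le_mul a a'
    calc dist ((f a : Fin n → ℝ)) ((f a' : Fin n → ℝ)) = dist (f a) (f a') := rfl
      _ ≤ dist a a' := this
      _ = dist (i a) (i a') := (hi.dist_eq a a').symm
      _ = 1 * dist (i a) (i a') := (one_mul _).symm
  obtain ⟨F, hF, hFeq⟩ := hlip.extend_pi
  refine ⟨fun b => ⟨r (F b), hrS _⟩, ?_, ?_⟩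
  · apply LipschitzWith.of_dist_le_mul
    intro b b'
    calc dist (r (F b)) (r (F b')) ≤ dist (F b) (F b') := hr _ _
      _ ≤ 1 * dist b b' := hF.dist_le_mul b b'
  · intro a
    have h1 : F (i a) = (f a : Fin n → ℝ) := by
      rw [← hFeq ⟨a, rfl⟩, key a]
    apply Subtype.ext
    simp only [h1]
    exact hrfix _ (f a).2





/-- The tangent cone `T_p P = ⋃_{m ∈ ℕ} (p + m (P - p))`. -/
def tangentCone {n : ℕ} (P : Set (Fin n → ℝ)) (p : Fin n → ℝ) : Set (Fin n → ℝ) :=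
  ⋃ m : ℕ, (fun x => p + (m : ℝ) • (x - p)) '' P

section Poly

variable {n m : ℕ} {ν : Fin m → (Fin n → ℝ)} {c : Fin m → ℝ} {P : Set (Fin n → ℝ)}

/-- the linear functional of the i-th constraint -/
private def L (ν : Fin m → (Fin n → ℝ)) (i : Fin m) (x : Fin n → ℝ) : ℝ := ∑ j, ν i j * x j

lemma L_cont (i : Fin m) : Continuous (L ν i) := by
  unfold L
  exact continuous_finset_sum _ fun j _ => (continuous_const.mul (continuous_apply j))

lemma L_affine (i : Fin m) (p x : Fin n → ℝ) (t : ℝ) :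
    L ν i (p + t • (x - p)) = L ν i p + t * (L ν i x - L ν i p) := by
  unfold L
  have h1 : ∀ j, ν i j * (p + t • (x - p)) j
      = ν i j * p j + (t * (ν i j * x j) - t * (ν i j * p j)) := by
    intro j
    simp only [Pi.add_apply, Pi.smul_apply, Pi.sub_apply, smul_eq_mul]
    ring
  rw [Finset.sum_congr rfl fun j _ => h1 j, Finset.sum_add_distrib, Finset.sum_sub_distrib,
    ← Finset.mul_sum, ← Finset.mul_sum]
  ring

lemma mem_P_iff (hPeq : P = ⋂ i, {x | c i ≤ ∑ j, ν i j * x j}) (x : Fin n → ℝ) :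
    x ∈ P ↔ ∀ i, c i ≤ L ν i x := by
  rw [hPeq]; simp [L, mem_iInter]

lemma P_closed (hPeq : P = ⋂ i, {x | c i ≤ ∑ j, ν i j * x j}) : IsClosed P := by
  rw [hPeq]
  exact isClosed_iInter fun i => isClosed_le continuous_const (L_cont i)

lemma P_convex (hPeq : P = ⋂ i, {x | c i ≤ ∑ j, ν i j * x j}) : Convex ℝ P := by
  rw [hPeq]
  apply convex_iInter
  intro i
  have : Convex ℝ {x : Fin n → ℝ | c i ≤ L ν i x} := by
    have hl : IsLinearMap ℝ (L ν i) := by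
      constructor
      · intro x y; unfold L; rw [← Finset.sum_add_distrib]; congr 1; ext j
        simp [Pi.add_apply]; ring
      · intro t x; unfold L
        simp only [Pi.smul_apply, smul_eq_mul, Finset.mul_sum]
        apply Finset.sum_congr rfl
        intro j _; ring
    exact convex_halfSpace_ge hl (c i)
  simpa [L] using this

lemma self_subset_cone (p : Fin n → ℝ) : P ⊆ tangentCone P p := by
  intro x hx
  have h1 : x ∈ (fun y => p + ((1:ℕ):ℝ) • (y - p)) '' P := ⟨x, hx, by simp⟩
  exact mem_iUnion.2 ⟨1, h1⟩

lemma cone_eq (hPeq : P = ⋂ i, {x | c i ≤ ∑ j, ν i j * x j}) {p : Fin n → ℝ} (hp : p ∈ P) :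
    tangentCone P p = {x | ∀ i, c i < L ν i p ∨ c i ≤ L ν i x} := by
  apply Subset.antisymm
  · rintro x hx
    obtain ⟨k, ⟨y, hy, rfl⟩⟩ := mem_iUnion.1 hx
    intro i
    rcases lt_or_eq_of_le ((mem_P_iff hPeq p).1 hp i) with h | h
    · exact Or.inl h
    · right
      rw [L_affine, ← h]
      have h1 : c i ≤ L ν i y := (mem_P_iff hPeq y).1 hy i
      have h2 : (0:ℝ) ≤ (k:ℝ) := Nat.cast_nonneg k
      nlinarith [mul_nonneg h2 (sub_nonneg.2 h1)]
  · intro x hx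
    have hev : ∀ i : Fin m, ∀ᶠ k : ℕ in atTop, c i ≤ L ν i (p + ((k : ℝ) + 1)⁻¹ • (x - p)) := by
      intro i
      rcases hx i with h | h
      · have htend : Tendsto (fun k : ℕ => L ν i (p + ((k : ℝ) + 1)⁻¹ • (x - p))) atTop
            (𝓝 (L ν i p)) := by
          simp only [L_affine]
          have h0 : Tendsto (fun k : ℕ => ((k : ℝ) + 1)⁻¹) atTop (𝓝 0) := by
            simpa [one_div] using (tendsto_one_div_add_atTop_nhds_zero_nat :
              Tendsto (fun k : ℕ => 1 / ((k : ℝ) + 1)) atTop (𝓝 0))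
          have := (h0.mul_const (L ν i x - L ν i p)).const_add (L ν i p)
          simpa using this
        exact (htend.eventually (eventually_gt_nhds h)).mono fun k hk => le_of_lt hk
      · apply Filter.Eventually.of_forall
        intro k
        rw [L_affine]
        have hple : c i ≤ L ν i p := (mem_P_iff hPeq p).1 hp i
        have h0 : (0:ℝ) ≤ ((k : ℝ) + 1)⁻¹ := by positivity
        have h1 : ((k : ℝ) + 1)⁻¹ ≤ 1 := by
          rw [inv_le_one_iff₀]; right; linarith [Nat.cast_nonneg (α := ℝ) k]
        nlinarith [mul_nonneg h0 (sub_nonneg.2 h), mul_nonneg (sub_nonneg.2 h1) (sub_nonneg.2 hple)]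
    have : ∀ᶠ k : ℕ in atTop, ∀ i, c i ≤ L ν i (p + ((k : ℝ) + 1)⁻¹ • (x - p)) :=
      Filter.eventually_all.2 hev
    obtain ⟨k, hk⟩ := this.exists
    have hne : ((k : ℝ) + 1) ≠ 0 := by positivity
    have himg : x ∈ (fun y => p + (((k+1 : ℕ)):ℝ) • (y - p)) '' P := by
      refine ⟨p + ((k : ℝ) + 1)⁻¹ • (x - p), (mem_P_iff hPeq _).2 hk, ?_⟩
      push_cast
      simp only [add_sub_cancel_left, smul_smul]
      rw [mul_inv_cancel₀ hne, one_smul, add_sub_cancel]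
    exact mem_iUnion.2 ⟨k + 1, himg⟩

lemma cone_closed (hPeq : P = ⋂ i, {x | c i ≤ ∑ j, ν i j * x j}) {p : Fin n → ℝ} (hp : p ∈ P) :
    IsClosed (tangentCone P p) := by
  rw [cone_eq hPeq hp]
  have : {x : Fin n → ℝ | ∀ i, c i < L ν i p ∨ c i ≤ L ν i x} =
      ⋂ i, {x | c i < L ν i p ∨ c i ≤ L ν i x} := by ext x; simp [mem_iInter]
  rw [this]
  apply isClosed_iInter
  intro i
  by_cases h : c i < L ν i p
  · have : {x : Fin n → ℝ | c i < L ν i p ∨ c i ≤ L ν i x} = univ := by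
      ext x; simp [h]
    rw [this]; exact isClosed_univ
  · have : {x : Fin n → ℝ | c i < L ν i p ∨ c i ≤ L ν i x} = {x | c i ≤ L ν i x} := by
      ext x; simp [h]
    rw [this]; exact isClosed_le continuous_const (L_cont i)

lemma cone_local (hPeq : P = ⋂ i, {x | c i ≤ ∑ j, ν i j * x j}) {p : Fin n → ℝ} (hp : p ∈ P) :
    ∃ δ > 0, ∀ x, dist x p < δ → (x ∈ P ↔ x ∈ tangentCone P p) := by
  have hU : IsOpen {x : Fin n → ℝ | ∀ i, c i < L ν i p → c i < L ν i x} := by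
    have : {x : Fin n → ℝ | ∀ i, c i < L ν i p → c i < L ν i x} =
        ⋂ i, {x | c i < L ν i p → c i < L ν i x} := by ext x; simp [mem_iInter]
    rw [this]
    apply isOpen_iInter_of_finite
    intro i
    by_cases h : c i < L ν i p
    · have : {x : Fin n → ℝ | c i < L ν i p → c i < L ν i x} = {x | c i < L ν i x} := by
        ext x; simp [h]
      rw [this]; exact isOpen_lt continuous_const (L_cont i)
    · have : {x : Fin n → ℝ | c i < L ν i p → c i < L ν i x} = univ := by
        ext x; simp [h]
      rw [this]; exact isOpen_univ
  have hpU : p ∈ {x : Fin n → ℝ | ∀ i, c i < L ν i p → c i < L ν i x} := fun i h => h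
  obtain ⟨δ, hδ, hball⟩ := Metric.isOpen_iff.1 hU p hpU
  refine ⟨δ, hδ, fun x hx => ?_⟩
  constructor
  · intro h; exact self_subset_cone p h
  · intro h
    rw [cone_eq hPeq hp] at h
    apply (mem_P_iff hPeq x).2
    intro i
    rcases h i with h' | h'
    · exact le_of_lt (hball hx i h')
    · exact h'

end Poly





section Forward

variable {n : ℕ} {P : Set (Fin n → ℝ)} {p : Fin n → ℝ}

private def phi (p : Fin n → ℝ) (t : ℝ) (x : Fin n → ℝ) : Fin n → ℝ := p + t • (x - p)

lemma phi_dist (t : ℝ) (x y : Fin n → ℝ) : dist (phi p t x) (phi p t y) = |t| * dist x y := by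
  unfold phi
  rw [dist_add_left, dist_smul₀, dist_sub_right, Real.norm_eq_abs]

lemma phi_phi (a b : ℝ) (x : Fin n → ℝ) : phi p a (phi p b x) = phi p (a * b) x := by
  unfold phi
  simp [smul_smul]

lemma phi_self (t : ℝ) : phi p t p = p := by unfold phi; simp

lemma phi_one (x : Fin n → ℝ) : phi p 1 x = x := by unfold phi; simp

lemma phi_image_mono (hconv : Convex ℝ P) (hp : p ∈ P) {a b : ℝ} (ha : 0 ≤ a) (hab : a ≤ b)
    (hb : 0 < b) : phi p a '' P ⊆ phi p b '' P := by
  rintro x ⟨y, hy, rfl⟩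
  refine ⟨phi p (a / b) y, ?_, ?_⟩
  · have h1 : phi p (a / b) y = (1 - a / b) • p + (a / b) • y := by
      unfold phi
      funext j
      simp only [Pi.add_apply, Pi.smul_apply, Pi.sub_apply, smul_eq_mul]
      ring
    rw [h1]
    have hd0 : 0 ≤ a / b := div_nonneg ha hb.le
    have hd1 : a / b ≤ 1 := (div_le_one hb).2 hab
    exact hconv hp hy (by linarith) hd0 (by ring)
  · rw [phi_phi, mul_div_cancel₀ _ hb.ne']

lemma mem_cone_of_image {t : ℕ} {x : Fin n → ℝ} (h : x ∈ phi p ((t : ℕ) : ℝ) '' P) :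
    x ∈ tangentCone P p := mem_iUnion.2 ⟨t, h⟩

lemma cone_hasRetraction (hconv : Convex ℝ P) (hclosed : IsClosed (tangentCone P p))
    (hp : p ∈ P) (hr : HasRetraction P) : HasRetraction (tangentCone P p) := by
  obtain ⟨r, hrl, hrP, hrfix⟩ := hr
  set T := tangentCone P p with hT
  set s : ℕ → (Fin n → ℝ) → (Fin n → ℝ) :=
    fun k x => phi p ((k : ℝ) + 1) (r (phi p (((k : ℝ) + 1))⁻¹ x)) with hs
  have hkpos : ∀ k : ℕ, (0 : ℝ) < (k : ℝ) + 1 := fun k => by positivity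
  have hslip : ∀ k x y, dist (s k x) (s k y) ≤ dist x y := by
    intro k x y
    rw [hs]
    simp only
    rw [phi_dist]
    have h2 : dist (r (phi p (((k : ℝ) + 1))⁻¹ x)) (r (phi p (((k : ℝ) + 1))⁻¹ y))
        ≤ dist (phi p (((k : ℝ) + 1))⁻¹ x) (phi p (((k : ℝ) + 1))⁻¹ y) := hrl _ _
    rw [phi_dist] at h2
    have h3 : |(k : ℝ) + 1| = (k : ℝ) + 1 := abs_of_pos (hkpos k)
    have h4 : |(((k : ℝ) + 1))⁻¹| = (((k : ℝ) + 1))⁻¹ := abs_of_pos (by positivity)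
    rw [show |(k : ℝ) + 1| = (k : ℝ) + 1 from h3]
    rw [h4] at h2
    calc ((k : ℝ) + 1) * dist (r (phi p (((k : ℝ) + 1))⁻¹ x)) (r (phi p (((k : ℝ) + 1))⁻¹ y))
        ≤ ((k : ℝ) + 1) * ((((k : ℝ) + 1))⁻¹ * dist x y) := by
          apply mul_le_mul_of_nonneg_left h2 (hkpos k).le
      _ = dist x y := by
          rw [← mul_assoc, mul_inv_cancel₀ (hkpos k).ne', one_mul]
  have hsp : ∀ k, s k p = p := by
    intro k
    rw [hs]
    simp only
    rw [phi_self, hrfix p hp, phi_self]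
  have hsmem : ∀ k x, s k x ∈ phi p (((k + 1 : ℕ) : ℝ)) '' P := by
    intro k x
    refine ⟨r (phi p (((k : ℝ) + 1))⁻¹ x), hrP _, ?_⟩
    rw [hs]; push_cast; rfl
  have hsT : ∀ k x, s k x ∈ T := fun k x => mem_cone_of_image (hsmem k x)
  have hsfix : ∀ x ∈ T, ∀ᶠ k in atTop, s k x = x := by
    intro x hx
    obtain ⟨t, hxt⟩ := mem_iUnion.1 hx
    filter_upwards [eventually_ge_atTop t] with k hk
    have hximg : x ∈ phi p ((k : ℝ) + 1) '' P := by
      have : phi p ((t : ℕ) : ℝ) '' P ⊆ phi p ((k : ℝ) + 1) '' P := by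
        apply phi_image_mono hconv hp (Nat.cast_nonneg t) _ (hkpos k)
        have : (t : ℝ) ≤ (k : ℝ) := Nat.cast_le.2 hk
        linarith
      exact this hxt
    obtain ⟨y, hy, rfl⟩ := hximg
    rw [hs]
    simp only
    rw [phi_phi, inv_mul_cancel₀ (hkpos k).ne', phi_one, hrfix y hy]
  let U : Ultrafilter ℕ := Ultrafilter.of atTop
  have hU : (U : Filter ℕ) ≤ atTop := Ultrafilter.of_le atTop
  have hex : ∀ x, ∃ y, Tendsto (fun k => s k x) U (𝓝 y) := by
    intro x
    have hmem : ∀ k, s k x ∈ closedBall p (dist x p) := by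
      intro k
      rw [mem_closedBall]
      calc dist (s k x) p = dist (s k x) (s k p) := by rw [hsp k]
        _ ≤ dist x p := hslip k x p
    have hle : (U.map fun k => s k x : Filter (Fin n → ℝ)) ≤ 𝓟 (closedBall p (dist x p)) := by
      rw [le_principal_iff]
      exact Filter.mem_map.2 (Filter.Eventually.of_forall hmem)
    obtain ⟨y, _, hy⟩ := (isCompact_closedBall p (dist x p)).ultrafilter_le_nhds
      (U.map fun k => s k x) hle
    exact ⟨y, hy⟩
  choose g hg using hex
  refine ⟨g, ?_, ?_, ?_⟩
  · intro x y
    have h1 : Tendsto (fun k => dist (s k x) (s k y)) U (𝓝 (dist (g x) (g y))) :=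
      (hg x).dist (hg y)
    exact le_of_tendsto h1 (Filter.Eventually.of_forall fun k => hslip k x y)
  · intro z
    exact hclosed.mem_of_tendsto (hg z) (Filter.Eventually.of_forall fun k => hsT k z)
  · intro x hx
    have h1 : ∀ᶠ k in (U : Filter ℕ), s k x = x := (hsfix x hx).filter_mono hU
    have h2 : Tendsto (fun k => s k x) U (𝓝 x) :=
      Tendsto.congr' (by filter_upwards [h1] with k hk using hk.symm) tendsto_const_nhds
    exact tendsto_nhds_unique (hg x) h2

end Forward




section Hyper

variable {n : ℕ} {P : Set (Fin n → ℝ)}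

lemma clamp_exists {ι : Type} [Fintype ι] [Nonempty ι] (cs : ι → (Fin n → ℝ)) (ρ : ι → ℝ)
    (hρ : ∀ i, 0 ≤ ρ i) (hpair : ∀ i k, dist (cs i) (cs k) ≤ ρ i + ρ k)
    {μ ε : ℝ} (hμ : 0 ≤ μ) (hε : 0 ≤ ε) (q : Fin n → ℝ)
    (hq : ∀ i, dist q (cs i) ≤ ρ i + μ + ε) :
    ∃ y : Fin n → ℝ, dist y q ≤ ε ∧ ∀ i, dist y (cs i) ≤ ρ i + μ := by
  set A : Fin n → ℝ := fun j => Finset.univ.sup' (Finset.univ_nonempty) (fun i => cs i j - ρ i - μ)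
    with hA
  set B : Fin n → ℝ := fun j => Finset.univ.inf' (Finset.univ_nonempty) (fun i => cs i j + ρ i + μ)
    with hB
  have hcoord : ∀ (i k : ι) (j : Fin n), cs i j - cs k j ≤ ρ i + ρ k := by
    intro i k j
    have h1 : dist (cs i j) (cs k j) ≤ dist (cs i) (cs k) := dist_le_pi_dist _ _ j
    rw [Real.dist_eq] at h1
    have := (abs_le.1 (h1.trans (hpair i k))).2
    linarith [this]
  have hAB : ∀ j, A j ≤ B j := by
    intro j
    apply Finset.sup'_le
    intro i _
    apply Finset.le_inf'
    intro k _
    have := hcoord i k j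
    linarith
  have hqA : ∀ j, A j - ε ≤ q j := by
    intro j
    have h1 : ∀ i ∈ Finset.univ, cs i j - ρ i - μ ≤ q j + ε := by
      intro i _
      have h2 : dist (q j) (cs i j) ≤ dist q (cs i) := dist_le_pi_dist _ _ j
      rw [Real.dist_eq] at h2
      have := (abs_le.1 (h2.trans (hq i))).1
      linarith
    have h2 : A j ≤ q j + ε := Finset.sup'_le _ _ h1
    linarith
  have hqB : ∀ j, q j ≤ B j + ε := by
    intro j
    have h1 : ∀ i ∈ Finset.univ, q j - ε ≤ cs i j + ρ i + μ := by
      intro i _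
      have h2 : dist (q j) (cs i j) ≤ dist q (cs i) := dist_le_pi_dist _ _ j
      rw [Real.dist_eq] at h2
      have := (abs_le.1 (h2.trans (hq i))).2
      linarith
    have h2 : q j - ε ≤ B j := Finset.le_inf' _ _ h1
    linarith
  refine ⟨fun j => max (A j) (min (q j) (B j)), ?_, ?_⟩
  · rw [dist_pi_le_iff hε]
    intro j
    rw [Real.dist_eq, abs_le]
    rcases le_total (q j) (B j) with h | h
    · rcases le_total (A j) (q j) with h' | h'
      · rw [min_eq_left h, max_eq_right h']
        constructor <;> linarith
      · rw [min_eq_left h, max_eq_left h']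
        constructor <;> [linarith [hqA j]; linarith [hqA j]]
    · rw [min_eq_right h, max_eq_right (hAB j)]
      constructor <;> [linarith [hqB j]; linarith [hqB j]]
  · intro i
    rw [dist_pi_le_iff (by linarith [hρ i])]
    intro j
    rw [Real.dist_eq, abs_le]
    have hy1 : A j ≤ max (A j) (min (q j) (B j)) := le_max_left _ _
    have hy2 : max (A j) (min (q j) (B j)) ≤ B j :=
      max_le (hAB j) ((min_le_right _ _))
    have hiA : cs i j - ρ i - μ ≤ A j :=
      Finset.le_sup' (fun i => cs i j - ρ i - μ) (Finset.mem_univ i)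
    have hiB : B j ≤ cs i j + ρ i + μ :=
      Finset.inf'_le (fun i => cs i j + ρ i + μ) (Finset.mem_univ i)
    constructor <;> linarith

/-- The local-to-global hypothesis: every point of `P` has a neighborhood in which `P`
agrees with a set admitting a 1-Lipschitz retraction and containing `P`. -/
def LocalRetr {n : ℕ} (P : Set (Fin n → ℝ)) : Prop :=
  ∀ q ∈ P, ∃ T : Set (Fin n → ℝ), HasRetraction T ∧ P ⊆ T ∧
    ∃ δ > 0, ∀ x ∈ T, dist x q < δ → x ∈ P

lemma finHC (hPcl : IsClosed P) (hloc : LocalRetr P)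
    (ι : Type) [Fintype ι] [Nonempty ι] (cs : ι → (Fin n → ℝ)) (ρ : ι → ℝ)
    (hmem : ∀ i, cs i ∈ P) (hρ : ∀ i, 0 ≤ ρ i)
    (hpair : ∀ i k, dist (cs i) (cs k) ≤ ρ i + ρ k) :
    ∃ y ∈ P, ∀ i, dist y (cs i) ≤ ρ i := by
  classical
  set i0 : ι := Classical.arbitrary ι
  set S : Set ℝ := {μ : ℝ | 0 ≤ μ ∧ ∃ y ∈ P, ∀ i, dist y (cs i) ≤ ρ i + μ} with hS
  have hS0 : ρ i0 ∈ S := by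
    refine ⟨hρ i0, cs i0, hmem i0, fun i => ?_⟩
    rw [dist_comm]
    linarith [hpair i i0]
  have hSne : S.Nonempty := ⟨ρ i0, hS0⟩
  have hSbdd : BddBelow S := ⟨0, fun μ hμ => hμ.1⟩
  set lam := sInf S with hlam
  have hlam0 : 0 ≤ lam := le_csInf hSne fun μ hμ => hμ.1
  -- lam ∈ S
  have hlamS : ∃ y ∈ P, ∀ i, dist y (cs i) ≤ ρ i + lam := by
    have hseq : ∀ k : ℕ, ∃ y ∈ P, ∀ i, dist y (cs i) ≤ ρ i + lam + 1 / ((k : ℝ) + 1) := by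
      intro k
      have hpos : (0:ℝ) < 1 / ((k : ℝ) + 1) := by positivity
      have : sInf S < lam + 1 / ((k : ℝ) + 1) := by linarith
      obtain ⟨μ, hμS, hμlt⟩ := exists_lt_of_csInf_lt hSne this
      obtain ⟨y, hy, hyd⟩ := hμS.2
      exact ⟨y, hy, fun i => (hyd i).trans (by linarith)⟩
    choose y hyP hyd using hseq
    have hbd : ∀ k, y k ∈ closedBall (cs i0) (ρ i0 + lam + 1) := by
      intro k
      rw [mem_closedBall]
      have h1 : 1 / ((k : ℝ) + 1) ≤ 1 := by
        rw [div_le_one (by positivity)]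
        linarith [Nat.cast_nonneg (α := ℝ) k]
      have := hyd k i0
      linarith
    obtain ⟨a, _, φ, hφ, hlim⟩ :=
      tendsto_subseq_of_bounded isBounded_closedBall hbd
    have haP : a ∈ P := hPcl.mem_of_tendsto hlim (Eventually.of_forall fun k => hyP (φ k))
    refine ⟨a, haP, fun i => ?_⟩
    have h1 : Tendsto (fun k => dist (y (φ k)) (cs i)) atTop (𝓝 (dist a (cs i))) :=
      hlim.dist tendsto_const_nhds
    have h2 : Tendsto (fun k => ρ i + lam + 1 / ((φ k : ℝ) + 1)) atTop (𝓝 (ρ i + lam)) := by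
      have h3 : Tendsto (fun k : ℕ => 1 / ((φ k : ℝ) + 1)) atTop (𝓝 0) :=
        tendsto_one_div_add_atTop_nhds_zero_nat.comp hφ.tendsto_atTop
      have := h3.const_add (ρ i + lam)
      simpa using this
    exact le_of_tendsto_of_tendsto' h1 h2 fun k => hyd (φ k) i
  obtain ⟨q, hqP, hqd⟩ := hlamS
  rcases eq_or_lt_of_le hlam0 with h0 | hlampos
  · refine ⟨q, hqP, fun i => ?_⟩
    have := hqd i
    rw [← h0] at this
    simpa using this
  · exfalso
    obtain ⟨T, ⟨r, hrl, hrT, hrfix⟩, hPT, δ, hδ, hTloc⟩ := hloc q hqP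
    set ε := min lam (δ / 2) with hε
    have hεpos : 0 < ε := lt_min hlampos (by linarith)
    set μ := lam - ε with hμdef
    have hμ0 : 0 ≤ μ := by
      have : ε ≤ lam := min_le_left _ _
      simp only [hμdef]
      linarith
    obtain ⟨z, hzq, hzd⟩ := clamp_exists cs ρ hρ hpair hμ0 hεpos.le q
      (fun i => by have := hqd i; simp only [hμdef]; linarith)
    have hzP : r z ∈ P := by
      apply hTloc (r z) (hrT z)
      have h1 : dist (r z) q = dist (r z) (r q) := by rw [hrfix q (hPT hqP)]
      rw [h1]
      calc dist (r z) (r q) ≤ dist z q := hrl z q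
        _ ≤ ε := hzq
        _ < δ := by
          have : ε ≤ δ / 2 := min_le_right _ _
          linarith
    have hμS : μ ∈ S := by
      refine ⟨hμ0, r z, hzP, fun i => ?_⟩
      have h1 : r (cs i) = cs i := hrfix (cs i) (hPT (hmem i))
      calc dist (r z) (cs i) = dist (r z) (r (cs i)) := by rw [h1]
        _ ≤ dist z (cs i) := hrl z (cs i)
        _ ≤ ρ i + μ := hzd i
    have : lam ≤ μ := csInf_le hSbdd hμS
    simp only [hμdef] at this
    linarith

lemma HCinf (hPcl : IsClosed P) (hloc : LocalRetr P)
    (ι : Type) [Nonempty ι] (cs : ι → (Fin n → ℝ)) (ρ : ι → ℝ)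
    (hmem : ∀ i, cs i ∈ P) (hρ : ∀ i, 0 ≤ ρ i)
    (hpair : ∀ i k, dist (cs i) (cs k) ≤ ρ i + ρ k) :
    ∃ y ∈ P, ∀ i, dist y (cs i) ≤ ρ i := by
  classical
  set t0 := Classical.arbitrary ι with ht0
  have hK : IsCompact (closedBall (cs t0) (ρ t0) ∩ P) :=
    (isCompact_closedBall _ _).inter_right hPcl
  have hsub : ∀ u : Finset ι,
      ((closedBall (cs t0) (ρ t0) ∩ P) ∩ ⋂ t ∈ u, (closedBall (cs t) (ρ t) ∩ P)).Nonempty := by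
    intro u
    haveI : Nonempty ↥(insert t0 u : Finset ι) := ⟨⟨t0, Finset.mem_insert_self _ _⟩⟩
    obtain ⟨y, hyP, hyd⟩ := finHC hPcl hloc ↥(insert t0 u : Finset ι)
      (fun t => cs t) (fun t => ρ t)
      (fun t => hmem t) (fun t => hρ t) (fun t s => hpair t s)
    refine ⟨y, ⟨⟨?_, hyP⟩, ?_⟩⟩
    · exact mem_closedBall.2 (hyd ⟨t0, Finset.mem_insert_self _ _⟩)
    · apply mem_iInter₂.2
      intro t ht
      exact ⟨mem_closedBall.2 (hyd ⟨t, Finset.mem_insert_of_mem ht⟩), hyP⟩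
  obtain ⟨y, hy1, hy2⟩ := hK.inter_iInter_nonempty (fun t => closedBall (cs t) (ρ t) ∩ P)
    (fun t => IsClosed.inter Metric.isClosed_closedBall hPcl) hsub
  rw [mem_iInter] at hy2
  exact ⟨y, hy1.2, fun t => mem_closedBall.1 (hy2 t).1⟩

/-- goodness of a prefix of approximants -/
def IsGood (P : Set (Fin n → ℝ)) (u : ℕ → (Fin n → ℝ)) (k : ℕ) (v : Fin k → (Fin n → ℝ)) : Prop :=
  (∀ j, v j ∈ P) ∧ (∀ j, ∀ x ∈ P, dist (v j) x ≤ dist (u (j : ℕ)) x) ∧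
  ∀ j j', dist (v j) (v j') ≤ dist (u (j : ℕ)) (u (j' : ℕ))

lemma good_extend (hPcl : IsClosed P) (hPne : P.Nonempty) (hloc : LocalRetr P)
    (u : ℕ → (Fin n → ℝ)) (k : ℕ) (v : Fin k → (Fin n → ℝ)) (hv : IsGood P u k v) :
    ∃ w : Fin (k+1) → (Fin n → ℝ), IsGood P u (k+1) w ∧ ∀ j : Fin k, w j.castSucc = v j := by
  classical
  haveI : Nonempty ↥P := hPne.to_subtype
  obtain ⟨y, hyP, hyd⟩ := HCinf hPcl hloc (↥P ⊕ Fin k)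
    (Sum.elim (fun x : ↥P => (x : Fin n → ℝ)) v)
    (Sum.elim (fun x : ↥P => dist (u k) (x : Fin n → ℝ)) (fun j => dist (u k) (u (j : ℕ))))
    (by rintro (x | j); exacts [x.2, hv.1 j])
    (by rintro (x | j) <;> exact dist_nonneg)
    (by
      rintro (x | j) (x' | j') <;> simp only [Sum.elim_inl, Sum.elim_inr]
      · calc dist (x : Fin n → ℝ) (x' : Fin n → ℝ) ≤ dist (x : Fin n → ℝ) (u k)
              + dist (u k) (x' : Fin n → ℝ) := dist_triangle _ _ _
          _ = dist (u k) (x : Fin n → ℝ) + dist (u k) (x' : Fin n → ℝ) := by rw [dist_comm]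
      · calc dist (x : Fin n → ℝ) (v j') = dist (v j') (x : Fin n → ℝ) := dist_comm _ _
          _ ≤ dist (u (j' : ℕ)) (x : Fin n → ℝ) := hv.2.1 j' _ x.2
          _ ≤ dist (u (j' : ℕ)) (u k) + dist (u k) (x : Fin n → ℝ) := dist_triangle _ _ _
          _ = dist (u k) (x : Fin n → ℝ) + dist (u k) (u (j' : ℕ)) := by
              rw [dist_comm (u (j' : ℕ)) (u k)]; ring
      · calc dist (v j) (x' : Fin n → ℝ) ≤ dist (u (j : ℕ)) (x' : Fin n → ℝ) := hv.2.1 j _ x'.2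
          _ ≤ dist (u (j : ℕ)) (u k) + dist (u k) (x' : Fin n → ℝ) := dist_triangle _ _ _
          _ = dist (u k) (u (j : ℕ)) + dist (u k) (x' : Fin n → ℝ) := by
              rw [dist_comm (u (j : ℕ)) (u k)]
      · calc dist (v j) (v j') ≤ dist (u (j : ℕ)) (u (j' : ℕ)) := hv.2.2 j j'
          _ ≤ dist (u (j : ℕ)) (u k) + dist (u k) (u (j' : ℕ)) := dist_triangle _ _ _
          _ = dist (u k) (u (j : ℕ)) + dist (u k) (u (j' : ℕ)) := by
              rw [dist_comm (u (j : ℕ)) (u k)])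
  have hyP' : ∀ x ∈ P, dist y x ≤ dist (u k) x := by
    intro x hx
    simpa using hyd (Sum.inl ⟨x, hx⟩)
  have hyv : ∀ j : Fin k, dist y (v j) ≤ dist (u k) (u (j : ℕ)) := by
    intro j
    simpa using hyd (Sum.inr j)
  refine ⟨Fin.snoc v y, ⟨?_, ?_, ?_⟩, fun j => by simp⟩
  · intro j
    induction j using Fin.lastCases with
    | last => rw [Fin.snoc_last]; exact hyP
    | cast j => rw [Fin.snoc_castSucc]; exact hv.1 j
  · intro j x hx
    induction j using Fin.lastCases with
    | last =>
      rw [Fin.snoc_last]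
      simpa using hyP' x hx
    | cast j =>
      rw [Fin.snoc_castSucc]
      simpa using hv.2.1 j x hx
  · intro j j'
    induction j using Fin.lastCases with
    | last =>
      induction j' using Fin.lastCases with
      | last => simp [Fin.snoc_last]
      | cast j' =>
        rw [Fin.snoc_last, Fin.snoc_castSucc]
        simpa using hyv j'
    | cast j =>
      induction j' using Fin.lastCases with
      | last =>
        rw [Fin.snoc_last, Fin.snoc_castSucc, dist_comm (v j) y]
        simp only [Fin.coe_castSucc, Fin.val_last]
        rw [dist_comm (u (j : ℕ)) (u k)]
        exact hyv j
      | cast j' =>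
        rw [Fin.snoc_castSucc, Fin.snoc_castSucc]
        simpa using hv.2.2 j j'

lemma localRetr_hasRetraction (hPcl : IsClosed P) (hPne : P.Nonempty) (hloc : LocalRetr P) :
    HasRetraction P := by
  classical
  obtain ⟨u, hu⟩ := TopologicalSpace.exists_dense_seq (Fin n → ℝ)
  let W : ∀ k : ℕ, {v : Fin k → (Fin n → ℝ) // IsGood P u k v} := fun k =>
    Nat.rec ⟨fun j => j.elim0, fun j => j.elim0, fun j => j.elim0, fun j => j.elim0⟩
      (fun k prev => ⟨Classical.choose (good_extend hPcl hPne hloc u k prev.1 prev.2),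
        (Classical.choose_spec (good_extend hPcl hPne hloc u k prev.1 prev.2)).1⟩) k
  have hWs : ∀ (k : ℕ) (j : Fin k), (W (k+1)).1 j.castSucc = (W k).1 j := fun k j =>
    (Classical.choose_spec (good_extend hPcl hPne hloc u k (W k).1 (W k).2)).2 j
  set Y : ℕ → (Fin n → ℝ) := fun k => (W (k+1)).1 (Fin.last k) with hYdef
  have hYW : ∀ (m k : ℕ) (h : k < m), (W m).1 ⟨k, h⟩ = Y k := by
    intro m
    induction m with
    | zero => intro k h; omega
    | succ m ih =>
      intro k h
      rcases Nat.lt_succ_iff_lt_or_eq.1 h with h' | rfl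
      · have hc : (⟨k, h⟩ : Fin (m+1)) = (⟨k, h'⟩ : Fin m).castSucc := rfl
        rw [hc, hWs m ⟨k, h'⟩, ih k h']
      · have hc : (⟨k, h⟩ : Fin (k+1)) = Fin.last k := rfl
        rw [hc]
  have hYP : ∀ k, Y k ∈ P := fun k => (W (k+1)).2.1 _
  have hYa : ∀ k, ∀ x ∈ P, dist (Y k) x ≤ dist (u k) x := by
    intro k x hx
    have := (W (k+1)).2.2.1 (Fin.last k) x hx
    simpa using this
  have hYb : ∀ k l, dist (Y k) (Y l) ≤ dist (u k) (u l) := by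
    intro k l
    have hk : k < max k l + 1 := by omega
    have hl : l < max k l + 1 := by omega
    have := (W (max k l + 1)).2.2.2 ⟨k, hk⟩ ⟨l, hl⟩
    rw [hYW _ k hk, hYW _ l hl] at this
    simpa using this
  have happrox : ∀ (z : Fin n → ℝ) (i : ℕ), ∃ k, dist z (u k) < 1 / ((i : ℝ) + 1) := by
    intro z i
    exact hu.exists_dist_lt z (by positivity)
  choose σ hσ using happrox
  have hkey : ∀ z z' i, dist (Y (σ z i)) (Y (σ z' i))
      ≤ 1 / ((i : ℝ) + 1) + dist z z' + 1 / ((i : ℝ) + 1) := by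
    intro z z' i
    calc dist (Y (σ z i)) (Y (σ z' i)) ≤ dist (u (σ z i)) (u (σ z' i)) := hYb _ _
      _ ≤ dist (u (σ z i)) z + dist z z' + dist z' (u (σ z' i)) := dist_triangle4 _ _ _ _
      _ ≤ 1 / ((i : ℝ) + 1) + dist z z' + 1 / ((i : ℝ) + 1) := by
          have h1 := (hσ z i).le
          have h2 := (hσ z' i).le
          rw [dist_comm (u (σ z i)) z]
          linarith
  have hcau : ∀ z i i', dist (Y (σ z i)) (Y (σ z i'))
      ≤ 1 / ((i : ℝ) + 1) + 1 / ((i' : ℝ) + 1) := by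
    intro z i i'
    calc dist (Y (σ z i)) (Y (σ z i')) ≤ dist (u (σ z i)) (u (σ z i')) := hYb _ _
      _ ≤ dist (u (σ z i)) z + dist z (u (σ z i')) := dist_triangle _ _ _
      _ ≤ 1 / ((i : ℝ) + 1) + 1 / ((i' : ℝ) + 1) := by
          have h1 := (hσ z i).le
          have h2 := (hσ z i').le
          rw [dist_comm (u (σ z i)) z]
          linarith
  have hconv : ∀ z, ∃ w, Tendsto (fun i => Y (σ z i)) atTop (𝓝 w) := by
    intro z
    apply cauchySeq_tendsto_of_complete
    rw [Metric.cauchySeq_iff]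
    intro ε hε
    obtain ⟨N, hN⟩ := exists_nat_one_div_lt (half_pos hε)
    refine ⟨N, fun i hi i' hi' => ?_⟩
    have hb1 : 1 / ((i : ℝ) + 1) ≤ 1 / ((N : ℝ) + 1) := by
      apply one_div_le_one_div_of_le (by positivity)
      have : (N : ℝ) ≤ (i : ℝ) := Nat.cast_le.2 hi
      linarith
    have hb2 : 1 / ((i' : ℝ) + 1) ≤ 1 / ((N : ℝ) + 1) := by
      apply one_div_le_one_div_of_le (by positivity)
      have : (N : ℝ) ≤ (i' : ℝ) := Nat.cast_le.2 hi'
      linarith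
    have := hcau z i i'
    have hN' : 1 / ((N : ℝ) + 1) < ε / 2 := by
      have : ((N : ℝ) + 1) = ((N : ℕ) : ℝ) + 1 := by norm_num
      simpa using hN
    calc dist (Y (σ z i)) (Y (σ z i')) ≤ 1 / ((i : ℝ) + 1) + 1 / ((i' : ℝ) + 1) := hcau z i i'
      _ < ε := by linarith
  choose r hr using hconv
  refine ⟨r, ?_, ?_, ?_⟩
  · intro z z'
    have hd : Tendsto (fun i => dist (Y (σ z i)) (Y (σ z' i))) atTop (𝓝 (dist (r z) (r z'))) :=
      (hr z).dist (hr z')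
    have h0 : Tendsto (fun i : ℕ => 1 / ((i : ℝ) + 1)) atTop (𝓝 0) :=
      tendsto_one_div_add_atTop_nhds_zero_nat
    have hg : Tendsto (fun i : ℕ => 1 / ((i : ℝ) + 1) + dist z z' + 1 / ((i : ℝ) + 1)) atTop
        (𝓝 (0 + dist z z' + 0)) := (h0.add tendsto_const_nhds).add h0
    have := le_of_tendsto_of_tendsto' hd hg (hkey z z')
    simpa using this
  · intro z
    exact hPcl.mem_of_tendsto (hr z) (Eventually.of_forall fun i => hYP _)
  · intro x hx
    have h1 : ∀ i, dist (Y (σ x i)) x ≤ 1 / ((i : ℝ) + 1) :=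
      fun i => (hYa _ x hx).trans (by rw [dist_comm]; exact (hσ x i).le)
    have h2 : Tendsto (fun i => Y (σ x i)) atTop (𝓝 x) := by
      rw [tendsto_iff_dist_tendsto_zero]
      apply squeeze_zero (fun i => dist_nonneg) h1
      exact tendsto_one_div_add_atTop_nhds_zero_nat
    exact tendsto_nhds_unique (hr x) h2

end Hyper


/-- A convex polyhedron in `ℝⁿ` is a finite intersection of closed half-spaces. -/
def IsConvexPolyhedron {n : ℕ} (P : Set (Fin n → ℝ)) : Prop :=
  ∃ (m : ℕ) (ν : Fin m → (Fin n → ℝ)) (c : Fin m → ℝ),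
    (∀ i, ν i ≠ 0) ∧ P = ⋂ i, {x | c i ≤ ∑ j, ν i j * x j}

/-- A convex polyhedron `P ⊆ l∞ⁿ` with nonempty interior is injective iff all its tangent
cones at boundary points are injective. -/
theorem convexPolyhedron_injective_iff_tangentCones {n : ℕ} (P : Set (Fin n → ℝ))
    (hP : IsConvexPolyhedron P) (hint : (interior P).Nonempty) :
    IsInjectiveSubset P ↔ ∀ p ∈ frontier P, IsInjectiveSubset (tangentCone P p) := by
  obtain ⟨m, ν, c, hν, hPeq⟩ := hP
  have hPne : P.Nonempty := ⟨hint.choose, interior_subset hint.choose_spec⟩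
  have hPcl : IsClosed P := P_closed hPeq
  have hPcv : Convex ℝ P := P_convex hPeq
  constructor
  · intro hinj p hp
    have hpP : p ∈ P := by
      have : p ∈ closure P := hp.1
      rwa [hPcl.closure_eq] at this
    exact (cone_hasRetraction hPcv (cone_closed hPeq hpP) hpP
      hinj.hasRetraction).isInjectiveSubset
  · intro hco
    apply HasRetraction.isInjectiveSubset
    apply localRetr_hasRetraction hPcl hPne
    intro q hqP
    by_cases hqf : q ∈ frontier P
    · obtain ⟨δ, hδ, hloc⟩ := cone_local hPeq hqP
      exact ⟨tangentCone P q, (hco q hqf).hasRetraction, self_subset_cone q, δ, hδ,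
        fun x hxT hxd => (hloc x hxd).2 hxT⟩
    · have hqint : q ∈ interior P := by
        rw [hPcl.frontier_eq] at hqf
        simp only [mem_diff, not_and, not_not] at hqf
        exact hqf hqP
      obtain ⟨δ, hδ, hball⟩ := Metric.isOpen_iff.1 isOpen_interior q hqint
      refine ⟨univ, ⟨id, fun x y => le_refl _, fun z => mem_univ z, fun x _ => rfl⟩,
        subset_univ _, δ, hδ, ?_⟩
      intro x _ hxd
      exact interior_subset (hball (mem_ball.2 hxd))
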